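/- Let (X_1,...,X_S) ∼ Multinomial(n; p_1,...,p_S), a > 0, and r(p) = f((np+a)/(n+Sa)) with f(x) = -x ln x. Then ∑_{i=1}^S E[P_n(i)·(r(P_n(i) - 1/n) - r(P_n(i)))²] ≤ (1/(n+Sa)²)·∑_{i=1}^S p_i·(3 - ln((np_i+a)/(n+Sa)))², where P_n(i) = X_i/n. -/

import Mathlib

set_option maxHeartbeats 1000000



open Finset

/-- r(p) = f((np+a)/(n+Sa)) with f(x) = -x ln x. -/
noncomputable def rfun (n S : ℕ) (a q : ℝ) : ℝ :=
  -(((n : ℝ) * q + a) / ((n : ℝ) + S * a)) *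
    Real.log (((n : ℝ) * q + a) / ((n : ℝ) + S * a))


lemma aux_fdiff {y x : ℝ} (hy : 0 < y) (hyx : y ≤ x) (hx1 : x ≤ 1) :
    |(-y * Real.log y) - (-x * Real.log x)| ≤ (x - y) * (3 - Real.log x) := by
  have hx : 0 < x := lt_of_lt_of_le hy hyx
  have hlx : Real.log x ≤ 0 := Real.log_nonpos hx.le hx1
  have hlyx : Real.log y ≤ Real.log x := Real.log_le_log hy hyx
  have hkey : Real.log x - Real.log y ≤ (x - y) / y := by
    have := Real.log_le_sub_one_of_pos (div_pos hx hy)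
    rwa [Real.log_div hx.ne' hy.ne', div_sub_one hy.ne'] at this
  have hkey' : y * (Real.log x - Real.log y) ≤ x - y := by
    have := mul_le_mul_of_nonneg_left hkey hy.le
    rwa [mul_div_cancel₀ _ hy.ne'] at this
  rw [abs_le]
  constructor
  · nlinarith [mul_nonneg hy.le (sub_nonneg.2 hlyx)]
  · nlinarith [mul_nonneg (sub_nonneg.2 hyx) (neg_nonneg.2 hlx)]

lemma binom_sum (p : ℝ) (n : ℕ) :
    ∑ j ∈ range (n + 1), (n.choose j : ℝ) * p ^ j * (1 - p) ^ (n - j) = 1 := by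
  have h := add_pow p (1 - p) n
  have h2 : ∑ j ∈ range (n + 1), (n.choose j : ℝ) * p ^ j * (1 - p) ^ (n - j)
      = ∑ j ∈ range (n + 1), p ^ j * (1 - p) ^ (n - j) * (n.choose j : ℝ) :=
    Finset.sum_congr rfl (fun j _ => by ring)
  rw [h2, ← h]
  norm_num

lemma binom_mean (p : ℝ) (m : ℕ) :
    ∑ j ∈ range (m + 1 + 1), (((m+1).choose j : ℝ) * p ^ j * (1 - p) ^ (m + 1 - j)) * j
      = (m + 1) * p := by
  rw [Finset.sum_range_succ']
  simp only [Nat.cast_zero, mul_zero, add_zero, Nat.cast_add, Nat.cast_one]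
  have hstep : ∀ k ∈ range (m + 1),
      (((m+1).choose (k+1) : ℝ) * p ^ (k+1) * (1 - p) ^ (m + 1 - (k+1))) * ((k:ℝ)+1)
        = ((m : ℝ) + 1) * p * ((m.choose k : ℝ) * p ^ k * (1 - p) ^ (m - k)) := by
    intro k hk
    have h := Nat.add_one_mul_choose_eq m k
    have hcast : ((m+1).choose (k+1) : ℝ) * ((k:ℝ)+1) = ((m:ℝ)+1) * (m.choose k : ℝ) := by
      exact_mod_cast congrArg (Nat.cast (R := ℝ)) h.symm
    have hexp : m + 1 - (k + 1) = m - k := by omega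
    rw [hexp]
    calc (((m+1).choose (k+1) : ℝ) * p ^ (k+1) * (1 - p) ^ (m - k)) * ((k:ℝ)+1)
        = (((m+1).choose (k+1) : ℝ) * ((k:ℝ)+1)) * (p ^ (k+1) * (1 - p) ^ (m - k)) := by
          ring
      _ = (((m:ℝ)+1) * (m.choose k : ℝ)) * (p ^ (k+1) * (1 - p) ^ (m - k)) := by
          rw [hcast]
      _ = ((m : ℝ) + 1) * p * ((m.choose k : ℝ) * p ^ k * (1 - p) ^ (m - k)) := by ring
  rw [Finset.sum_congr rfl hstep, ← Finset.mul_sum, binom_sum, mul_one]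

lemma concave_phi (n : ℕ) (a c : ℝ) (ha : 0 < a) (hc : 0 < c) (hac : (n : ℝ) + a ≤ c) :
    ConcaveOn ℝ (Set.Icc (0:ℝ) 1)
      (fun x => x * (3 - Real.log (((n:ℝ) * x + a) / c)) ^ 2) := by
  set L : ℝ → ℝ := fun x => Real.log (((n:ℝ) * x + a) / c) with hLdef
  set φ : ℝ → ℝ := fun x => x * (3 - L x) ^ 2 with hφdef
  set g : ℝ → ℝ := fun x => (3 - L x) ^ 2 - 2 * x * (3 - L x) * ((n:ℝ) / ((n:ℝ) * x + a))
    with hgdef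
  set h : ℝ → ℝ := fun x => -4 * (3 - L x) * ((n:ℝ) / ((n:ℝ) * x + a))
    + 2 * x * ((n:ℝ) / ((n:ℝ) * x + a)) ^ 2 * (4 - L x) with hhdef
  have hA : ∀ x : ℝ, HasDerivAt (fun x : ℝ => ((n:ℝ) * x + a) / c) ((n:ℝ) / c) x := by
    intro x
    simpa using (((hasDerivAt_id x).const_mul (n:ℝ)).add_const a).div_const c
  have hL : ∀ x : ℝ, 0 < (n:ℝ) * x + a → HasDerivAt L ((n:ℝ) / ((n:ℝ) * x + a)) x := by
    intro x hx
    have := (Real.hasDerivAt_log (ne_of_gt (div_pos hx hc))).comp x (hA x)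
    refine this.congr_deriv ?_
    field_simp
  have hD : ∀ x : ℝ, 0 < (n:ℝ) * x + a →
      HasDerivAt (fun x : ℝ => (n:ℝ) / ((n:ℝ) * x + a))
        (-((n:ℝ) * (n:ℝ)) / ((n:ℝ) * x + a) ^ 2) x := by
    intro x hx
    have h1 : HasDerivAt (fun x : ℝ => (n:ℝ) * x + a) (n:ℝ) x := by
      simpa using ((hasDerivAt_id x).const_mul (n:ℝ)).add_const a
    have := (hasDerivAt_const x (n:ℝ)).div h1 hx.ne'
    refine this.congr_deriv ?_
    field_simp
    ring
  have hφ' : ∀ x : ℝ, 0 < (n:ℝ) * x + a → HasDerivAt φ (g x) x := by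
    intro x hx
    have h1 : HasDerivAt (fun x => (3 - L x) ^ 2)
        (2 * (3 - L x) * -((n:ℝ) / ((n:ℝ) * x + a))) x := by
      have := (((hL x hx).const_sub 3).pow 2)
      exact this.congr_deriv (by ring)
    have := (hasDerivAt_id x).mul h1
    refine this.congr_deriv ?_
    simp only [hgdef, id_eq]
    ring
  have hg' : ∀ x : ℝ, 0 < (n:ℝ) * x + a → HasDerivAt g (h x) x := by
    intro x hx
    have h1 : HasDerivAt (fun x => (3 - L x) ^ 2)
        (2 * (3 - L x) * -((n:ℝ) / ((n:ℝ) * x + a))) x := by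
      have := (((hL x hx).const_sub 3).pow 2)
      exact this.congr_deriv (by ring)
    have h2 : HasDerivAt (fun x : ℝ => 2 * x * (3 - L x))
        (2 * (3 - L x) + 2 * x * -((n:ℝ) / ((n:ℝ) * x + a))) x := by
      have := ((hasDerivAt_id x).const_mul 2).mul ((hL x hx).const_sub 3)
      refine this.congr_deriv ?_
      simp only [id_eq]
      ring
    have h3 := h2.mul (hD x hx)
    have := h1.sub h3
    refine this.congr_deriv ?_
    simp only [hhdef, id_eq]
    have hne : ((n:ℝ) * x + a) ≠ 0 := hx.ne'
    field_simp
    ring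
  have hUopen : IsOpen {x : ℝ | 0 < (n:ℝ) * x + a} := by
    have : Continuous (fun x : ℝ => (n:ℝ) * x + a) :=
      (continuous_const.mul continuous_id).add continuous_const
    exact isOpen_Ioi.preimage this
  have hint : ∀ x ∈ interior (Set.Icc (0:ℝ) 1), 0 < (n:ℝ) * x + a := by
    rw [interior_Icc]
    intro x hx
    have : 0 ≤ (n:ℝ) * x := mul_nonneg (Nat.cast_nonneg n) (le_of_lt hx.1)
    linarith
  have hderivφ : ∀ x : ℝ, 0 < (n:ℝ) * x + a → deriv φ x = g x := by
    intro x hx; exact (hφ' x hx).deriv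
  have hEq : ∀ x : ℝ, 0 < (n:ℝ) * x + a → deriv φ =ᶠ[nhds x] g := by
    intro x hx
    filter_upwards [hUopen.mem_nhds hx] with y hy
    exact hderivφ y hy
  apply concaveOn_of_deriv2_nonpos (convex_Icc 0 1)
  · -- continuity
    apply ContinuousOn.mul continuousOn_id
    apply ContinuousOn.pow
    apply ContinuousOn.sub continuousOn_const
    apply ContinuousOn.log
    · exact (Continuous.div_const ((continuous_const.mul continuous_id).add
        continuous_const) c).continuousOn
    · intro x hx
      have : 0 < (n:ℝ) * x + a := by
        have : 0 ≤ (n:ℝ) * x := mul_nonneg (Nat.cast_nonneg n) hx.1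
        linarith
      positivity
  · intro x hx
    exact ((hφ' x (hint x hx)).differentiableAt).differentiableWithinAt
  · intro x hx
    have hx' := hint x hx
    exact (((hg' x hx').differentiableAt).congr_of_eventuallyEq
      (hEq x hx')).differentiableWithinAt
  · intro x hx
    rw [interior_Icc] at hx
    have hx' : 0 < (n:ℝ) * x + a := by
      have : 0 ≤ (n:ℝ) * x := mul_nonneg (Nat.cast_nonneg n) (le_of_lt hx.1)
      linarith
    have : deriv^[2] φ x = h x := by
      show deriv (deriv φ) x = h x
      rw [Filter.EventuallyEq.deriv_eq (hEq x hx')]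
      exact (hg' x hx').deriv
    rw [this]
    -- now show h x ≤ 0
    have hu : 0 < (n:ℝ) * x + a := hx'
    have hL0 : L x ≤ 0 := by
      apply Real.log_nonpos (by positivity)
      rw [div_le_one hc]
      have : (n:ℝ) * x ≤ (n:ℝ) := by
        nlinarith [Nat.cast_nonneg (α := ℝ) n, hx.2]
      linarith
    have hxn : (n:ℝ) * x ≤ (n:ℝ) * x + a := by linarith
    have key : h x = ((n:ℝ) / ((n:ℝ) * x + a) ^ 2) *
        (2 * x * (n:ℝ) * (4 - L x) - 4 * (3 - L x) * ((n:ℝ) * x + a)) := by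
      simp only [hhdef]
      field_simp
      ring
    rw [key]
    apply mul_nonpos_of_nonneg_of_nonpos
    · positivity
    · nlinarith [hu, hL0, hxn]

/-- ∑ᵢ E[Pₙ(i)·(r(Pₙ(i) - 1/n) - r(Pₙ(i)))²]
  ≤ (1/(n+Sa)²)·∑ᵢ pᵢ·(3 - ln((npᵢ+a)/(n+Sa)))²,
where Pₙ(i) = Xᵢ/n ∼ Binomial(n, pᵢ)/n. -/
theorem stmt19 (n S : ℕ) (hn : 1 ≤ n) (hS : 2 ≤ S) (a : ℝ) (ha : 0 < a)
    (p : Fin S → ℝ) (hp : ∀ i, 0 ≤ p i) (hps : ∑ i, p i = 1) :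
    ∑ i, ∑ j ∈ Finset.range (n + 1),
        (n.choose j : ℝ) * p i ^ j * (1 - p i) ^ (n - j) *
          (((j : ℝ) / n) *
            (rfun n S a ((j : ℝ) / n - 1 / n) - rfun n S a ((j : ℝ) / n)) ^ 2)
      ≤ (1 / ((n : ℝ) + S * a) ^ 2) *
        ∑ i, p i * (3 - Real.log (((n : ℝ) * p i + a) / ((n : ℝ) + S * a))) ^ 2 := by
  have hnR : (0:ℝ) < n := by exact_mod_cast hn
  have hSR : (1:ℝ) ≤ S := by exact_mod_cast le_trans (by norm_num) hS
  set c : ℝ := (n : ℝ) + S * a with hcdef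
  have hac : (n : ℝ) + a ≤ c := by
    have : a ≤ (S:ℝ) * a := le_mul_of_one_le_left ha.le hSR
    simp only [hcdef]; linarith
  have hc : 0 < c := by linarith
  clear_value c
  set φ : ℝ → ℝ := fun x => x * (3 - Real.log (((n:ℝ) * x + a) / c)) ^ 2 with hφdef
  rw [Finset.mul_sum]
  apply Finset.sum_le_sum
  intro i _
  set q := p i with hqdef
  have hq0 : 0 ≤ q := hp i
  have hq1 : q ≤ 1 := by
    rw [← hps]
    exact Finset.single_le_sum (fun j _ => hp j) (Finset.mem_univ i)
  have hw0 : ∀ j, 0 ≤ (n.choose j : ℝ) * q ^ j * (1 - q) ^ (n - j) := fun j => by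
    have h1q : (0:ℝ) ≤ 1 - q := by linarith
    positivity
  have step1 : ∀ j ∈ range (n+1),
      (n.choose j : ℝ) * q ^ j * (1 - q) ^ (n - j) *
          (((j : ℝ) / n) *
            (rfun n S a ((j : ℝ) / n - 1 / n) - rfun n S a ((j : ℝ) / n)) ^ 2)
      ≤ (n.choose j : ℝ) * q ^ j * (1 - q) ^ (n - j) * (1 / c ^ 2 * φ ((j:ℝ)/n)) := by
    intro j hj
    have hjn : j ≤ n := by have := Finset.mem_range.1 hj; omega
    have hjnR : (j:ℝ) ≤ (n:ℝ) := by exact_mod_cast hjn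
    apply mul_le_mul_of_nonneg_left _ (hw0 j)
    have hnmul : (n:ℝ) * ((j:ℝ)/n) + a = (j:ℝ) + a := by field_simp
    have hφval : φ ((j:ℝ)/n) = ((j:ℝ)/n) * (3 - Real.log (((j:ℝ) + a) / c)) ^ 2 := by
      simp only [hφdef, hnmul]
    rw [hφval]
    rcases Nat.eq_zero_or_pos j with hj0 | hj1
    · subst hj0; simp
    · have hj1R : (1:ℝ) ≤ (j:ℝ) := by exact_mod_cast hj1
      set x : ℝ := ((j:ℝ) + a) / c with hxdef
      set y : ℝ := ((j:ℝ) - 1 + a) / c with hydef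
      have hy : 0 < y := by
        apply div_pos _ hc; linarith
      have hyx : y ≤ x := by
        rw [hydef, hxdef]; gcongr; linarith
      have hx1 : x ≤ 1 := by
        rw [hxdef, div_le_one hc]; linarith
      have hxy : x - y = 1 / c := by
        rw [hxdef, hydef, div_sub_div_same]; norm_num
      have hr1 : rfun n S a ((j:ℝ)/n - 1/n) = -y * Real.log y := by
        rw [rfun]
        have harg : (n:ℝ) * ((j:ℝ)/n - 1/n) + a = (j:ℝ) - 1 + a := by
          field_simp
        rw [harg, ← hcdef, ← hydef]
      have hr2 : rfun n S a ((j:ℝ)/n) = -x * Real.log x := by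
        rw [rfun, hnmul, ← hcdef, ← hxdef]
      have habs : |rfun n S a ((j:ℝ)/n - 1/n) - rfun n S a ((j:ℝ)/n)|
          ≤ (1/c) * (3 - Real.log x) := by
        rw [hr1, hr2, ← hxy]
        exact aux_fdiff hy hyx hx1
      have hsq : (rfun n S a ((j:ℝ)/n - 1/n) - rfun n S a ((j:ℝ)/n)) ^ 2
          ≤ 1 / c ^ 2 * (3 - Real.log x) ^ 2 := by
        have hb := abs_le.1 habs
        have := sq_le_sq' hb.1 hb.2
        calc (rfun n S a ((j:ℝ)/n - 1/n) - rfun n S a ((j:ℝ)/n)) ^ 2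
            ≤ ((1/c) * (3 - Real.log x)) ^ 2 := this
          _ = 1 / c ^ 2 * (3 - Real.log x) ^ 2 := by ring
      calc ((j:ℝ)/n) * (rfun n S a ((j:ℝ)/n - 1/n) - rfun n S a ((j:ℝ)/n)) ^ 2
          ≤ ((j:ℝ)/n) * (1 / c ^ 2 * (3 - Real.log x) ^ 2) :=
            mul_le_mul_of_nonneg_left hsq (by positivity)
        _ = 1 / c ^ 2 * (((j:ℝ)/n) * (3 - Real.log x) ^ 2) := by ring
  have hwsum : ∑ j ∈ range (n+1), (n.choose j : ℝ) * q ^ j * (1 - q) ^ (n - j) = 1 :=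
    binom_sum q n
  have hmean : ∑ j ∈ range (n+1),
      ((n.choose j : ℝ) * q ^ j * (1 - q) ^ (n - j)) * ((j:ℝ)/n) = q := by
    obtain ⟨m, rfl⟩ : ∃ m, n = m + 1 := ⟨n - 1, by omega⟩
    have h := binom_mean q m
    have h2 : ∑ j ∈ range (m+1+1),
        (((m+1).choose j : ℝ) * q ^ j * (1 - q) ^ (m+1-j)) * ((j:ℝ)/((m:ℝ)+1))
        = (∑ j ∈ range (m+1+1),
            (((m+1).choose j : ℝ) * q ^ j * (1 - q) ^ (m+1-j)) * (j:ℝ)) / ((m:ℝ)+1) := by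
      rw [Finset.sum_div]
      exact Finset.sum_congr rfl (fun j _ => by ring)
    have hm1 : ((m:ℝ) + 1) ≠ 0 := by positivity
    push_cast at h ⊢
    rw [h2, h]
    exact mul_div_cancel_left₀ q hm1
  have hjensen : ∑ j ∈ range (n+1),
      ((n.choose j : ℝ) * q ^ j * (1 - q) ^ (n - j)) * φ ((j:ℝ)/n) ≤ φ q := by
    have hmem : ∀ j ∈ range (n+1), (j:ℝ)/n ∈ Set.Icc (0:ℝ) 1 := by
      intro j hj
      have hjn : j ≤ n := by have := Finset.mem_range.1 hj; omega
      have hjnR : (j:ℝ) ≤ (n:ℝ) := by exact_mod_cast hjn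
      exact ⟨by positivity, by rw [div_le_one hnR]; exact hjnR⟩
    have h := (concave_phi n a c ha hc hac).le_map_sum
      (fun j _ => hw0 j) hwsum hmem
    simp only [smul_eq_mul] at h
    rw [hmean] at h
    exact h
  calc ∑ j ∈ range (n+1),
        (n.choose j : ℝ) * q ^ j * (1 - q) ^ (n - j) *
          (((j : ℝ) / n) *
            (rfun n S a ((j : ℝ) / n - 1 / n) - rfun n S a ((j : ℝ) / n)) ^ 2)
      ≤ ∑ j ∈ range (n+1),
        (n.choose j : ℝ) * q ^ j * (1 - q) ^ (n - j) * (1 / c ^ 2 * φ ((j:ℝ)/n)) :=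
        Finset.sum_le_sum step1
    _ = 1 / c ^ 2 * ∑ j ∈ range (n+1),
        ((n.choose j : ℝ) * q ^ j * (1 - q) ^ (n - j)) * φ ((j:ℝ)/n) := by
        rw [Finset.mul_sum]
        exact Finset.sum_congr rfl (fun j _ => by ring)
    _ ≤ 1 / c ^ 2 * φ q := mul_le_mul_of_nonneg_left hjensen (by positivity)
    _ = 1 / c ^ 2 * (q * (3 - Real.log (((n:ℝ) * q + a) / c)) ^ 2) := rfl
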